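/- Let σ > 0 and let F ∈ B¹_σ satisfy ∫_ℝ F(x) dx = 0 and F(x) ≤ χ_{[0, 2π/σ]}(x) for all x ∈ ℝ, where χ_{[0, 2π/σ]} is the indicator function of [0, 2π/σ]. Then the derivative of F satisfies F′(2πn/σ) = 0 for every n ∈ ℤ \\ {0, 1}. -/

import Mathlib

set_option maxHeartbeats 1600000

open Filter Topology

section BernsteinAux


open MeasureTheory Real Set

/-- The characteristic function of a measure `μ` on `ℝ`: `f(t) = ∫ e^{-itx} dμ(x)`. -/
noncomputable def charFunOfMeasure (μ : Measure ℝ) (t : ℝ) : ℂ :=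
  ∫ x : ℝ, Complex.exp (-(t * x) * Complex.I) ∂μ

/-- The characteristic function of a density `φ`: `f(t) = ∫ e^{-itx} φ(x) dx`. -/
noncomputable def charFunOfDensity (φ : ℝ → ℝ) (t : ℝ) : ℂ :=
  ∫ x : ℝ, Complex.exp (-(t * x) * Complex.I) * (φ x : ℂ)

/-- `g` is the characteristic function of some probability measure on `ℝ`. -/
def IsCharFun (g : ℝ → ℂ) : Prop :=
  ∃ μ : Measure ℝ, IsProbabilityMeasure μ ∧ ∀ t, g t = charFunOfMeasure μ t

/-- `φ` is a probability density on `ℝ`. -/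
def IsProbDensity (φ : ℝ → ℝ) : Prop :=
  Integrable φ ∧ (∀ᵐ x ∂(volume : Measure ℝ), 0 ≤ φ x) ∧ (∫ x, φ x) = 1

/-- The essential support of a measurable function `φ : ℝ → ℝ`. -/
def essSupport (φ : ℝ → ℝ) : Set ℝ :=
  {x : ℝ | ∀ ε > 0, 0 < volume (Ioo (x - ε) (x + ε) ∩ {t : ℝ | 0 < |φ t|})}

/-- The Bernstein space `B¹_σ` of real-valued integrable functions whose Fourier
transform vanishes for `|t| > σ`, identified with their continuous representatives. -/
def MemB1 (σ : ℝ) (F : ℝ → ℝ) : Prop :=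
  Continuous F ∧ Integrable F ∧
    ∀ t : ℝ, σ < |t| → (∫ x : ℝ, Complex.exp (-(t * x) * Complex.I) * (F x : ℂ)) = 0


lemma hat_cont (F : ℝ → ℝ) (hc : Continuous F) (hi : Integrable F) :
    Continuous fun t : ℝ => ∫ x : ℝ, Complex.exp (-(t * x) * Complex.I) * (F x : ℂ) := by
  apply continuous_of_dominated (bound := fun x => |F x|)
  · intro t
    exact (Continuous.mul (by continuity) (Complex.continuous_ofReal.comp hc)).aestronglyMeasurable
  · intro t
    filter_upwards with x
    have : ‖Complex.exp (-(↑t * ↑x) * Complex.I)‖ = 1 := by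
      have : (-(↑t * ↑x) * Complex.I : ℂ) = ((-(t*x) : ℝ) : ℂ) * Complex.I := by push_cast; ring
      rw [this]
      exact Complex.norm_exp_ofReal_mul_I _
    rw [norm_mul, this, one_mul, Complex.norm_real, Real.norm_eq_abs]
  · exact hi.abs
  · filter_upwards with x
    continuity

lemma hat_vanishes (σ : ℝ) (hσ : 0 < σ) (F : ℝ → ℝ) (hF : MemB1 σ F)
    (hint : (∫ x, F x) = 0) (t : ℝ) (ht : σ ≤ |t| ∨ t = 0) :
    (∫ x : ℝ, Complex.exp (-(t * x) * Complex.I) * (F x : ℂ)) = 0 := by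
  set H : ℝ → ℂ := fun t => ∫ x : ℝ, Complex.exp (-(t * x) * Complex.I) * (F x : ℂ) with hH
  have hcont : Continuous H := hat_cont F hF.1 hF.2.1
  have hgt : ∀ s : ℝ, σ < |s| → H s = 0 := hF.2.2
  show H t = 0
  rcases ht with ht | rfl
  · rcases eq_or_lt_of_le ht with heq | hlt
    · -- |t| = σ : boundary case, use one-sided limits
      have key : ∀ s : ℝ, |s| = σ → H s = 0 := by
        intro s hs
        rcases (abs_eq hσ.le).mp hs with h | h
        · -- s = σ
          rw [h]
          have h1 : Tendsto H (𝓝[>] σ) (𝓝 (H σ)) :=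
            (hcont.tendsto σ).mono_left nhdsWithin_le_nhds
          have h2 : Tendsto H (𝓝[>] σ) (𝓝 0) := by
            apply Tendsto.congr' _ tendsto_const_nhds
            filter_upwards [self_mem_nhdsWithin] with s hs
            exact (hgt s (by rw [abs_of_pos (hσ.trans hs)]; exact hs)).symm
          exact tendsto_nhds_unique h1 h2
        · -- s = -σ
          rw [h]
          have h1 : Tendsto H (𝓝[<] (-σ)) (𝓝 (H (-σ))) :=
            (hcont.tendsto (-σ)).mono_left nhdsWithin_le_nhds
          have h2 : Tendsto H (𝓝[<] (-σ)) (𝓝 0) := by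
            apply Tendsto.congr' _ tendsto_const_nhds
            filter_upwards [self_mem_nhdsWithin] with s hs
            have : σ < |s| := by
              rw [abs_of_neg (by linarith [mem_Iio.mp hs])]
              linarith [mem_Iio.mp hs]
            exact (hgt s this).symm
          exact tendsto_nhds_unique h1 h2
      exact key t heq.symm
    · exact hgt t hlt
  · -- t = 0
    have h0 : H 0 = ∫ x : ℝ, ((F x : ℝ) : ℂ) := by
      rw [hH]
      simp
    have h1 : ∫ (x : ℝ), ((F x : ℝ):ℂ) = ((∫ x, F x : ℝ) : ℂ) := integral_ofReal (𝕜 := ℂ)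
    rw [h0, h1, hint, Complex.ofReal_zero]

lemma integrable_cm (F : ℝ → ℝ) (hFi : Integrable F) (T : ℝ) [Fact (0 < T)]
    (p : C(AddCircle T, ℂ)) : Integrable fun x : ℝ => p (x : AddCircle T) * (F x : ℂ) := by
  apply Integrable.bdd_mul (hFi.ofReal (𝕜 := ℂ))
  · exact (p.continuous.comp (AddCircle.continuous_mk' T)).aestronglyMeasurable
  · exact ae_of_all _ fun x => p.norm_coe_le_norm _

lemma span_vanish (σ : ℝ) (hσ : 0 < σ) (F : ℝ → ℝ)
    (hFi : Integrable F)
    (T : ℝ) (hTd : T = 2 * π / σ) [Fact (0 < T)]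
    (hat : ∀ t : ℝ, σ ≤ |t| ∨ t = 0 → (∫ x : ℝ, Complex.exp (-(t * x) * Complex.I) * (F x : ℂ)) = 0)
    (p : C(AddCircle T, ℂ))
    (hp : p ∈ Submodule.span ℂ (Set.range (@fourier T))) :
    (∫ x : ℝ, p (x : AddCircle T) * (F x : ℂ)) = 0 := by
  induction hp using Submodule.span_induction with
  | mem q hq =>
      obtain ⟨k, rfl⟩ := hq
      have hconv : ∀ x : ℝ, (fourier k) (x : AddCircle T) =
          Complex.exp (-((((-(k * σ)) : ℝ) : ℂ) * (x : ℂ)) * Complex.I) := by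
        intro x
        rw [fourier_coe_apply]
        congr 1
        have hσ' : (σ : ℂ) ≠ 0 := by exact_mod_cast hσ.ne'
        have hπ' : (π : ℂ) ≠ 0 := by exact_mod_cast Real.pi_ne_zero
        rw [hTd]
        push_cast
        field_simp
      calc (∫ x : ℝ, (fourier k) (x : AddCircle T) * (F x : ℂ))
          = ∫ x : ℝ, Complex.exp (-((((-(k * σ)) : ℝ) : ℂ) * (x : ℂ)) * Complex.I) * (F x : ℂ) := by
            simp only [hconv]
        _ = 0 := by
            apply hat (-(k * σ))
            rcases eq_or_ne k 0 with rfl | hk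
            · right; simp
            · left
              rw [abs_neg, abs_mul, abs_of_pos hσ]
              calc σ = 1 * σ := (one_mul σ).symm
                _ ≤ |(k : ℝ)| * σ := by
                    apply mul_le_mul_of_nonneg_right _ hσ.le
                    rw [← Int.cast_abs]
                    exact_mod_cast Int.one_le_abs hk
  | zero => simp only [ContinuousMap.zero_apply, zero_mul, integral_zero]
  | add q r hq hr ihq ihr =>
      have h1 := integrable_cm F hFi T q
      have h2 := integrable_cm F hFi T r
      simp only [ContinuousMap.add_apply, add_mul]
      rw [integral_add h1 h2, ihq, ihr, add_zero]
  | smul c q hq ihq =>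
      simp only [ContinuousMap.smul_apply, smul_eq_mul, mul_assoc]
      rw [integral_const_mul, ihq, mul_zero]

lemma key_integral (σ : ℝ) (hσ : 0 < σ) (F : ℝ → ℝ)
    (hFi : Integrable F)
    (T : ℝ) (hTd : T = 2 * π / σ) [Fact (0 < T)]
    (hat : ∀ t : ℝ, σ ≤ |t| ∨ t = 0 → (∫ x : ℝ, Complex.exp (-(t * x) * Complex.I) * (F x : ℂ)) = 0)
    (φ : ℝ → ℝ) (hφc : Continuous φ) (hφ0 : ∀ y : ℝ, y ∉ Ioo 0 T → φ y = 0) :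
    (∫ x : ℝ, (AddCircle.liftIco T 0 φ) (x : AddCircle T) * F x) = 0 := by
  have hT : 0 < T := Fact.out
  have hg : Continuous (AddCircle.liftIco T 0 φ) := by
    apply AddCircle.liftIco_zero_continuous
    · rw [hφ0 0 (by simp), hφ0 T (by simp)]
    · exact hφc.continuousOn
  set gc : C(AddCircle T, ℂ) :=
    ⟨fun z => ((AddCircle.liftIco T 0 φ z : ℝ) : ℂ), Complex.continuous_ofReal.comp hg⟩ with hgc
  have hzero_c : (∫ x : ℝ, gc (x : AddCircle T) * (F x : ℂ)) = 0 := by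
    set S := Submodule.span ℂ (Set.range (@fourier T)) with hS
    have hdense : Dense (S : Set C(AddCircle T, ℂ)) := by
      rw [dense_iff_closure_eq, ← Submodule.topologicalClosure_coe, hS,
        span_fourier_closure_eq_top]
      simp
    set I := ∫ x : ℝ, gc (x : AddCircle T) * (F x : ℂ) with hI
    set M := ∫ x : ℝ, |F x| with hM
    have hM0 : 0 ≤ M := integral_nonneg fun x => abs_nonneg _
    have hbound : ∀ p : C(AddCircle T, ℂ), p ∈ S → ‖I‖ ≤ ‖gc - p‖ * M := by
      intro p hp
      have h1 := integrable_cm F hFi T gc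
      have h2 := integrable_cm F hFi T p
      have e1 : (∫ x : ℝ, (gc - p) (x : AddCircle T) * (F x : ℂ))
          = (∫ x : ℝ, gc (x : AddCircle T) * (F x : ℂ)) - ∫ x : ℝ, p (x : AddCircle T) * (F x : ℂ) := by
        rw [← integral_sub h1 h2]
        congr 1
        funext x
        simp only [ContinuousMap.sub_apply, sub_mul]
      have hsub : I = ∫ x : ℝ, (gc - p) (x : AddCircle T) * (F x : ℂ) := by
        rw [e1, span_vanish σ hσ F hFi T hTd hat p hp, sub_zero, hI]
      rw [hsub]
      calc ‖∫ x : ℝ, (gc - p) (x : AddCircle T) * (F x : ℂ)‖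
          ≤ ∫ x : ℝ, ‖(gc - p) (x : AddCircle T) * (F x : ℂ)‖ := norm_integral_le_integral_norm _
        _ ≤ ∫ x : ℝ, ‖gc - p‖ * |F x| := by
            apply integral_mono_of_nonneg
            · filter_upwards with x; positivity
            · exact hFi.abs.const_mul _
            · filter_upwards with x
              rw [norm_mul, Complex.norm_real, Real.norm_eq_abs]
              exact mul_le_mul_of_nonneg_right ((gc - p).norm_coe_le_norm _) (abs_nonneg _)
        _ = ‖gc - p‖ * M := by rw [integral_const_mul]
    by_contra hne
    have hpos : 0 < ‖I‖ := norm_pos_iff.mpr hne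
    obtain ⟨p, hpS, hdist⟩ := hdense.exists_dist_lt gc (show (0:ℝ) < ‖I‖ / (2 * (M + 1)) by positivity)
    have h1 : ‖I‖ ≤ ‖gc - p‖ * M := hbound p hpS
    rw [← dist_eq_norm] at h1
    have hd : dist gc p * M ≤ (‖I‖ / (2 * (M + 1))) * M := mul_le_mul_of_nonneg_right hdist.le hM0
    have h3 : ‖I‖ ≤ (‖I‖ / (2 * (M + 1))) * M := h1.trans hd
    have hlt : (‖I‖ / (2 * (M + 1))) * M < ‖I‖ := by
      rw [div_mul_eq_mul_div, div_lt_iff₀ (by positivity)]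
      nlinarith
    linarith
  -- transfer to the real integral
  have hre : (∫ x : ℝ, ((AddCircle.liftIco T 0 φ (x : AddCircle T) * F x : ℝ) : ℂ)) = 0 := by
    rw [← hzero_c]
    congr 1
    funext x
    rw [hgc]
    push_cast
    rfl
  have h1 : (∫ x : ℝ, ((AddCircle.liftIco T 0 φ (x : AddCircle T) * F x : ℝ) : ℂ))
      = ((∫ x : ℝ, AddCircle.liftIco T 0 φ (x : AddCircle T) * F x : ℝ) : ℂ) :=
    integral_ofReal (𝕜 := ℂ)
  rw [h1] at hre
  exact_mod_cast hre

lemma exists_cell (T : ℝ) (hT : 0 < T) (x : ℝ) :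
    ∃ k : ℤ, (k : ℝ) * T ≤ x ∧ x < (k : ℝ) * T + T := by
  refine ⟨⌊x / T⌋, ?_, ?_⟩
  · rw [← le_div_iff₀ hT]
    exact Int.floor_le _
  · have h := Int.lt_floor_add_one (x / T)
    rw [div_lt_iff₀ hT] at h
    linarith

lemma lift_cell (T : ℝ) [Fact (0 < T)] (φ : ℝ → ℝ) (k : ℤ) (x : ℝ)
    (h1 : (k : ℝ) * T ≤ x) (h2 : x < (k : ℝ) * T + T) :
    AddCircle.liftIco T 0 φ (x : AddCircle T) = φ (x - k * T) := by
  have hmem : x - (k : ℝ) * T ∈ Ico (0 : ℝ) (0 + T) := ⟨by linarith, by rw [zero_add]; linarith⟩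
  have hcoe : ((x - (k : ℝ) * T : ℝ) : AddCircle T) = (x : AddCircle T) := by
    have h0 : (((k : ℝ) * T : ℝ) : AddCircle T) = 0 := by
      have e : ((k : ℝ) * T) = (k : ℤ) • (T : ℝ) := by simp [zsmul_eq_mul]
      rw [e]
      rw [show (((k : ℤ) • (T : ℝ) : ℝ) : AddCircle T) = (k : ℤ) • ((T : ℝ) : AddCircle T) from
        QuotientAddGroup.mk_zsmul (AddSubgroup.zmultiples T) (T : ℝ) k, AddCircle.coe_period, smul_zero]
    have e2 : ((x - (k : ℝ) * T : ℝ) : AddCircle T)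
        = (x : AddCircle T) - (((k : ℝ) * T : ℝ) : AddCircle T) :=
      QuotientAddGroup.mk_sub (AddSubgroup.zmultiples T) x ((k : ℝ) * T)
    rw [e2, h0, sub_zero]
  rw [← hcoe, AddCircle.liftIco_coe_apply hmem]

lemma phi_bdd (T : ℝ) (hT : 0 < T) (φ : ℝ → ℝ) (hφc : Continuous φ) :
    ∃ C : ℝ, ∀ y ∈ Icc (0:ℝ) T, |φ y| ≤ C := by
  obtain ⟨y₀, _, hy₀⟩ := isCompact_Icc.exists_isMaxOn (s := Icc (0:ℝ) T)
    ⟨0, by constructor <;> [rfl; exact hT.le]⟩ (hφc.abs.continuousOn)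
  exact ⟨|φ y₀|, fun y hy => hy₀ hy⟩

lemma integrable_lift_mul (T : ℝ) [Fact (0 < T)] (φ : ℝ → ℝ) (hφc : Continuous φ)
    (hφ0 : ∀ y : ℝ, y ∉ Ioo 0 T → φ y = 0) (F : ℝ → ℝ) (hFc : Continuous F) (hFi : Integrable F) :
    Integrable fun x : ℝ => AddCircle.liftIco T 0 φ (x : AddCircle T) * F x := by
  have hT : 0 < T := Fact.out
  have hg : Continuous (AddCircle.liftIco T 0 φ) := by
    apply AddCircle.liftIco_zero_continuous
    · rw [hφ0 0 (by simp), hφ0 T (by simp)]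
    · exact hφc.continuousOn
  obtain ⟨C, hC⟩ := phi_bdd T hT φ hφc
  have hψc : Continuous fun x : ℝ => AddCircle.liftIco T 0 φ (x : AddCircle T) :=
    hg.comp (AddCircle.continuous_mk' T)
  apply hFi.bdd_mul (c := C) hψc.aestronglyMeasurable
  refine ae_of_all _ (fun x => ?_)
  obtain ⟨k, h1, h2⟩ := exists_cell T hT x
  rw [Real.norm_eq_abs, lift_cell T φ k x h1 h2]
  exact hC _ ⟨by linarith, by linarith⟩

/-- vanishing of the derivative at lattice points (claim (2.18)). -/
theorem memB1_deriv_vanishes_at_lattice_points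
    (σ : ℝ) (hσ : 0 < σ) (F : ℝ → ℝ) (hF : MemB1 σ F)
    (hint : (∫ x, F x) = 0)
    (hle : ∀ x : ℝ, F x ≤ Set.indicator (Icc 0 (2 * π / σ)) 1 x) :
    ∀ n : ℤ, n ≠ 0 → n ≠ 1 → deriv F (2 * π * (n : ℝ) / σ) = 0 := by
  intro n hn0 hn1
  set T : ℝ := 2 * π / σ with hTd
  have hT : 0 < T := by rw [hTd]; positivity
  haveI : Fact (0 < T) := ⟨hT⟩
  have hFc := hF.1
  have hFi := hF.2.1
  have hat := hat_vanishes σ hσ F hF hint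
  have hkey : ∀ φ : ℝ → ℝ, Continuous φ → (∀ y : ℝ, y ∉ Ioo 0 T → φ y = 0) →
      (∫ x : ℝ, (AddCircle.liftIco T 0 φ) (x : AddCircle T) * F x) = 0 :=
    fun φ h1 h2 => key_integral σ hσ F hFi T hTd hat φ h1 h2
  have hFout : ∀ x : ℝ, x < 0 ∨ T < x → F x ≤ 0 := by
    intro x hx
    have h := hle x
    rwa [Set.indicator_of_notMem (fun hmem => by
      rcases hx with h' | h'
      · exact absurd hmem.1 (not_le.mpr h')
      · exact absurd hmem.2 (not_le.mpr h'))] at h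
  have hgoal : 2 * π * (n : ℝ) / σ = (n : ℝ) * T := by rw [hTd]; ring
  rw [hgoal]
  -- ### Stage 1 : F ≥ 0 on (0, T)
  have hnn : ∀ x ∈ Ioo (0:ℝ) T, 0 ≤ F x := by
    intro x₀ hx₀
    by_contra hneg
    push_neg at hneg
    have hU : IsOpen ({y : ℝ | F y < F x₀ / 2} ∩ Ioo 0 T) :=
      (isOpen_lt hFc continuous_const).inter isOpen_Ioo
    have hx₀U : x₀ ∈ {y : ℝ | F y < F x₀ / 2} ∩ Ioo 0 T :=
      ⟨by simp only [mem_setOf_eq]; linarith, hx₀⟩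
    obtain ⟨r, hr0, hball⟩ := Metric.isOpen_iff.mp hU x₀ hx₀U
    rw [Real.ball_eq_Ioo] at hball
    have hsub : Ioo (x₀ - r) (x₀ + r) ⊆ Ioo 0 T := fun y hy => (hball hy).2
    have hFlt : ∀ y ∈ Ioo (x₀ - r) (x₀ + r), F y < F x₀ / 2 := fun y hy => (hball hy).1
    set φ : ℝ → ℝ := fun y => max 0 (min (y - (x₀ - r)) ((x₀ + r) - y)) with hφ
    have hφc : Continuous φ := by fun_prop
    have hφnn : ∀ y, 0 ≤ φ y := fun y => le_max_left _ _
    have hsupp : ∀ y : ℝ, y ∉ Ioo (x₀ - r) (x₀ + r) → φ y = 0 := by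
      intro y hy
      rw [mem_Ioo, not_and_or, not_lt, not_lt] at hy
      rcases hy with h | h
      · exact max_eq_left (le_trans (min_le_left _ _) (by linarith))
      · exact max_eq_left (le_trans (min_le_right _ _) (by linarith))
    have hφ0 : ∀ y : ℝ, y ∉ Ioo 0 T → φ y = 0 := fun y hy => hsupp y (fun h => hy (hsub h))
    have hint0 := hkey φ hφc hφ0
    have hψint := integrable_lift_mul T φ hφc hφ0 F hFc hFi
    have hsplit := integral_add_compl (measurableSet_Ico (a := (0:ℝ)) (b := T)) hψint
    have hcompl : (∫ x in (Ico (0:ℝ) T)ᶜ, AddCircle.liftIco T 0 φ (x : AddCircle T) * F x) ≤ 0 := by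
      apply setIntegral_nonpos measurableSet_Ico.compl
      intro x hx
      obtain ⟨k, h1, h2⟩ := exists_cell T hT x
      rw [lift_cell T φ k x h1 h2]
      rcases eq_or_ne (φ (x - k * T)) 0 with h0 | h0
      · rw [h0, zero_mul]
      · have hxs : x - k * T ∈ Ioo (x₀ - r) (x₀ + r) := by
          by_contra hc; exact h0 (hsupp _ hc)
        have hxIooT : x - k * T ∈ Ioo 0 T := hsub hxs
        have hk : k ≠ 0 := by
          rintro rfl
          apply hx
          simp only [Int.cast_zero, zero_mul] at h1 h2
          exact ⟨h1, by linarith⟩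
        have hFx : F x ≤ 0 := by
          apply hFout
          rcases lt_or_ge k 0 with hk' | hk'
          · left
            have hkr : (k : ℝ) ≤ -1 := by exact_mod_cast (by omega : k ≤ -1)
            nlinarith [hxIooT.2]
          · right
            have hkr : (1 : ℝ) ≤ (k : ℝ) := by exact_mod_cast (by omega : 1 ≤ k)
            nlinarith [hxIooT.1]
        exact mul_nonpos_iff.mpr (Or.inl ⟨hφnn _, hFx⟩)
    have hIcoEq : (∫ x in Ico (0:ℝ) T, AddCircle.liftIco T 0 φ (x : AddCircle T) * F x)
        = ∫ x in Ico (0:ℝ) T, φ x * F x := by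
      apply setIntegral_congr_fun measurableSet_Ico
      intro x hx
      have h := lift_cell T φ 0 x (by push_cast; simpa using hx.1) (by push_cast; simpa using hx.2)
      simp only [Int.cast_zero, zero_mul, sub_zero] at h
      simp only [h]
    have hIcoLe : (∫ x in Ico (0:ℝ) T, φ x * F x)
        ≤ ∫ x in Ico (0:ℝ) T, (F x₀ / 2) * φ x := by
      apply setIntegral_mono_on
      · exact ((hφc.mul hFc).integrableOn_Icc).mono_set Ico_subset_Icc_self
      · exact ((continuous_const.mul hφc).integrableOn_Icc).mono_set Ico_subset_Icc_self
      · exact measurableSet_Ico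
      · intro x _
        rcases eq_or_ne (φ x) 0 with h0 | h0
        · rw [h0, zero_mul, mul_zero]
        · have hmem : x ∈ Ioo (x₀ - r) (x₀ + r) := by
            by_contra hc; exact h0 (hsupp _ hc)
          calc φ x * F x ≤ φ x * (F x₀ / 2) :=
                mul_le_mul_of_nonneg_left (hFlt x hmem).le (hφnn x)
            _ = (F x₀ / 2) * φ x := mul_comm _ _
    have hc : 0 < ∫ x in Ico (0:ℝ) T, φ x := by
      have hbnds : 0 ≤ x₀ - r ∧ x₀ + r ≤ T :=
        (Ioo_subset_Ioo_iff (by linarith : x₀ - r < x₀ + r)).mp hsub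
      have hpos : 0 < ∫ y in (x₀ - r)..(x₀ + r), φ y := by
        apply intervalIntegral.intervalIntegral_pos_of_pos_on
          (hφc.intervalIntegrable _ _) _ (by linarith)
        intro y hy
        exact lt_of_lt_of_le (lt_min (by linarith [hy.1]) (by linarith [hy.2])) (le_max_right _ _)
      have hmono : (∫ y in (x₀ - r)..(x₀ + r), φ y) ≤ ∫ y in (0:ℝ)..T, φ y :=
        intervalIntegral.integral_mono_interval hbnds.1 (by linarith) hbnds.2
          (ae_of_all _ fun y => hφnn y) (hφc.intervalIntegrable _ _)
      have heq : (∫ x in Ico (0:ℝ) T, φ x) = ∫ y in (0:ℝ)..T, φ y := by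
        rw [intervalIntegral.integral_of_le hT.le, integral_Ioc_eq_integral_Ioo,
          ← integral_Ico_eq_integral_Ioo]
      rw [heq]
      linarith
    have hmul : (∫ x in Ico (0:ℝ) T, (F x₀ / 2) * φ x) = (F x₀ / 2) * ∫ x in Ico (0:ℝ) T, φ x :=
      integral_const_mul _ _
    nlinarith [hsplit, hint0, hcompl, hIcoEq, hIcoLe, hmul, mul_pos (neg_pos.mpr (show F x₀ / 2 < 0 by linarith)) hc]
  -- ### Stage 1b : F 0 = 0 and F T = 0
  have hF0 : F 0 = 0 := by
    have hge : 0 ≤ F 0 := by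
      have ht : Tendsto F (𝓝[>] (0:ℝ)) (𝓝 (F 0)) := (hFc.tendsto 0).mono_left nhdsWithin_le_nhds
      refine ge_of_tendsto ht ?_
      filter_upwards [Ioo_mem_nhdsGT_of_mem (⟨le_refl 0, hT⟩ : (0:ℝ) ∈ Ico 0 T)] with y hy
      exact hnn y hy
    have hle0 : F 0 ≤ 0 := by
      have ht : Tendsto F (𝓝[<] (0:ℝ)) (𝓝 (F 0)) := (hFc.tendsto 0).mono_left nhdsWithin_le_nhds
      refine le_of_tendsto ht ?_
      filter_upwards [self_mem_nhdsWithin] with y hy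
      exact hFout y (Or.inl hy)
    linarith
  have hFT : F T = 0 := by
    have hge : 0 ≤ F T := by
      have ht : Tendsto F (𝓝[<] T) (𝓝 (F T)) := (hFc.tendsto T).mono_left nhdsWithin_le_nhds
      refine ge_of_tendsto ht ?_
      filter_upwards [Ioo_mem_nhdsLT_of_mem (⟨hT, le_refl T⟩ : T ∈ Ioc 0 T)] with y hy
      exact hnn y hy
    have hle0 : F T ≤ 0 := by
      have ht : Tendsto F (𝓝[>] T) (𝓝 (F T)) := (hFc.tendsto T).mono_left nhdsWithin_le_nhds
      refine le_of_tendsto ht ?_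
      filter_upwards [self_mem_nhdsWithin] with y hy
      exact hFout y (Or.inr hy)
    linarith
  -- ### basic facts about n
  have hncase : ((n:ℝ) ≤ -1) ∨ (2 ≤ (n:ℝ)) := by
    rcases lt_or_ge n 0 with h | h
    · left; exact_mod_cast (by omega : n ≤ -1)
    · right; exact_mod_cast (by omega : 2 ≤ n)
  have hx₁out : (n:ℝ) * T < 0 ∨ T < (n:ℝ) * T := by
    rcases hncase with h | h
    · left; nlinarith
    · right; nlinarith
  have hFx₁le : F ((n:ℝ) * T) ≤ 0 := hFout _ hx₁out
  -- ### Stage 2 : F (n T) = 0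
  have hFx₁ge : 0 ≤ F ((n:ℝ) * T) := by
    by_contra hneg
    push_neg at hneg
    set δ : ℝ := -F ((n:ℝ) * T) / 4 with hδ
    have hδ0 : 0 < δ := by rw [hδ]; linarith
    have hclaim : 0 ≤ F ((n:ℝ) * T) + 3 * δ := by
      have hopen : ∀ a b : ℝ, F a < b → ∃ r > 0, ∀ y : ℝ, |y - a| < r → F y < b := by
        intro a b hab
        obtain ⟨r, hr0, hball⟩ := Metric.isOpen_iff.mp (isOpen_lt hFc continuous_const) a hab
        exact ⟨r, hr0, fun y hy => hball (by rwa [Metric.mem_ball, Real.dist_eq])⟩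
      obtain ⟨r₀, hr₀, hb₀⟩ := hopen 0 δ (by rw [hF0]; exact hδ0)
      obtain ⟨r₁, hr₁, hb₁⟩ := hopen T δ (by rw [hFT]; exact hδ0)
      obtain ⟨r₂, hr₂, hb₂⟩ := hopen ((n:ℝ) * T) (F ((n:ℝ) * T) + δ) (by linarith)
      set ε : ℝ := min (min (r₀/2) (r₁/2)) (min (r₂/2) T) with hε
      have hε0 : 0 < ε :=
        lt_min (lt_min (by linarith) (by linarith)) (lt_min (by linarith) hT)
      have hεT : ε ≤ T := le_trans (min_le_right _ _) (min_le_right _ _)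
      have hεr₀ : ε < r₀ :=
        lt_of_le_of_lt (le_trans (min_le_left _ _) (min_le_left _ _)) (by linarith)
      have hεr₁ : ε < r₁ :=
        lt_of_le_of_lt (le_trans (min_le_left _ _) (min_le_right _ _)) (by linarith)
      have hεr₂ : ε < r₂ :=
        lt_of_le_of_lt (le_trans (min_le_right _ _) (min_le_left _ _)) (by linarith)
      set φ : ℝ → ℝ := fun y => max 0 (min y (ε - y)) with hφ
      have hφc : Continuous φ := by fun_prop
      have hφnn : ∀ y, 0 ≤ φ y := fun y => le_max_left _ _
      have hsupp : ∀ y : ℝ, y ∉ Ioo 0 ε → φ y = 0 := by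
        intro y hy
        rw [mem_Ioo, not_and_or, not_lt, not_lt] at hy
        rcases hy with h | h
        · exact max_eq_left (le_trans (min_le_left _ _) (by linarith))
        · exact max_eq_left (le_trans (min_le_right _ _) (by linarith))
      have hφ0 : ∀ y : ℝ, y ∉ Ioo 0 T → φ y = 0 := by
        intro y hy
        apply hsupp
        intro hmem
        exact hy ⟨hmem.1, lt_of_lt_of_le hmem.2 hεT⟩
      have hint0 := hkey φ hφc hφ0
      have hψint := integrable_lift_mul T φ hφc hφ0 F hFc hFi
      set A : Set ℝ := (Ico (0:ℝ) T ∪ Ico T (T + T)) ∪ Ico ((n:ℝ) * T) ((n:ℝ) * T + T) with hA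
      have hAm : MeasurableSet A :=
        (measurableSet_Ico.union measurableSet_Ico).union measurableSet_Ico
      have hsplit := integral_add_compl hAm hψint
      have hcompl : (∫ x in Aᶜ, AddCircle.liftIco T 0 φ (x : AddCircle T) * F x) ≤ 0 := by
        apply setIntegral_nonpos hAm.compl
        intro x hx
        obtain ⟨k, h1, h2⟩ := exists_cell T hT x
        rw [lift_cell T φ k x h1 h2]
        rcases eq_or_ne (φ (x - k * T)) 0 with h0 | h0
        · rw [h0, zero_mul]
        · have hxs : x - k * T ∈ Ioo 0 ε := by
            by_contra hc; exact h0 (hsupp _ hc)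
          have hk0 : k ≠ 0 := by
            rintro rfl
            apply hx
            left; left
            simp only [Int.cast_zero, zero_mul] at h1 h2
            exact ⟨h1, by linarith⟩
          have hk1 : k ≠ 1 := by
            rintro rfl
            apply hx
            left; right
            simp only [Int.cast_one, one_mul] at h1 h2
            exact ⟨h1, by linarith⟩
          have hkn : k ≠ n := by
            rintro rfl
            exact hx (Or.inr ⟨h1, h2⟩)
          have hFx : F x ≤ 0 := by
            apply hFout
            rcases lt_or_ge k 0 with hk' | hk'
            · left
              have hkr : (k : ℝ) ≤ -1 := by exact_mod_cast (by omega : k ≤ -1)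
              nlinarith [hxs.2]
            · right
              have hkr : (2 : ℝ) ≤ (k : ℝ) := by exact_mod_cast (by omega : 2 ≤ k)
              nlinarith [hxs.1]
          exact mul_nonpos_iff.mpr (Or.inl ⟨hφnn _, hFx⟩)
      have hdisj1 : Disjoint (Ico (0:ℝ) T) (Ico T (T + T)) := Set.Ico_disjoint_Ico_same
      have hdisj2 : Disjoint (Ico (0:ℝ) T ∪ Ico T (T + T)) (Ico ((n:ℝ) * T) ((n:ℝ) * T + T)) := by
        apply Disjoint.union_left <;> rw [Set.Ico_disjoint_Ico]
        · rcases hncase with h | h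
          · exact le_trans (min_le_right _ _) (le_trans (by nlinarith) (le_max_left _ _))
          · exact le_trans (min_le_left _ _) (le_trans (by nlinarith) (le_max_right _ _))
        · rcases hncase with h | h
          · exact le_trans (min_le_right _ _) (le_trans (by nlinarith) (le_max_left _ _))
          · exact le_trans (min_le_left _ _) (le_trans (by nlinarith) (le_max_right _ _))
      have hAsum : (∫ x in A, AddCircle.liftIco T 0 φ (x : AddCircle T) * F x)
          = (∫ x in Ico (0:ℝ) T, AddCircle.liftIco T 0 φ (x : AddCircle T) * F x)
            + (∫ x in Ico T (T + T), AddCircle.liftIco T 0 φ (x : AddCircle T) * F x)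
            + (∫ x in Ico ((n:ℝ) * T) ((n:ℝ) * T + T),
                AddCircle.liftIco T 0 φ (x : AddCircle T) * F x) := by
        rw [hA, setIntegral_union hdisj2 measurableSet_Ico
            (hψint.integrableOn) (hψint.integrableOn),
          setIntegral_union hdisj1 measurableSet_Ico
            (hψint.integrableOn) (hψint.integrableOn)]
      have cellbound : ∀ (k : ℤ) (B : ℝ), (∀ y : ℝ, |y - (k:ℝ) * T| ≤ ε → F y ≤ B) →
          (∫ x in Ico ((k:ℝ) * T) ((k:ℝ) * T + T),
              AddCircle.liftIco T 0 φ (x : AddCircle T) * F x)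
            ≤ B * ∫ x in Ico (0:ℝ) T, φ x := by
        intro k B hB
        have e1 : EqOn (fun x : ℝ => AddCircle.liftIco T 0 φ (x : AddCircle T) * F x)
            (fun x : ℝ => φ (x - (k:ℝ) * T) * F x) (Ico ((k:ℝ) * T) ((k:ℝ) * T + T)) := by
          intro x hx
          simp only [lift_cell T φ k x hx.1 hx.2]
        rw [setIntegral_congr_fun measurableSet_Ico e1]
        have step : (∫ x in Ico ((k:ℝ) * T) ((k:ℝ) * T + T), φ (x - (k:ℝ) * T) * F x)
            ≤ ∫ x in Ico ((k:ℝ) * T) ((k:ℝ) * T + T), B * φ (x - (k:ℝ) * T) := by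
          apply setIntegral_mono_on
          · exact (((hφc.comp (continuous_sub_right _)).mul hFc).integrableOn_Icc).mono_set
              Ico_subset_Icc_self
          · exact ((continuous_const.mul
              (hφc.comp (continuous_sub_right _))).integrableOn_Icc).mono_set Ico_subset_Icc_self
          · exact measurableSet_Ico
          · intro x _
            rcases eq_or_ne (φ (x - (k:ℝ) * T)) 0 with h0 | h0
            · rw [h0, zero_mul, mul_zero]
            · have hmem : x - (k:ℝ) * T ∈ Ioo 0 ε := by
                by_contra hc; exact h0 (hsupp _ hc)
              have hFxB : F x ≤ B := by
                apply hB
                rw [abs_of_pos hmem.1]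
                exact hmem.2.le
              calc φ (x - (k:ℝ) * T) * F x ≤ φ (x - (k:ℝ) * T) * B :=
                    mul_le_mul_of_nonneg_left hFxB (hφnn _)
                _ = B * φ (x - (k:ℝ) * T) := mul_comm _ _
        refine le_trans step ?_
        rw [integral_const_mul]
        have htrans : (∫ x in Ico ((k:ℝ) * T) ((k:ℝ) * T + T), φ (x - (k:ℝ) * T))
            = ∫ x in Ico (0:ℝ) T, φ x := by
          rw [integral_Ico_eq_integral_Ioo, ← integral_Ioc_eq_integral_Ioo,
            ← intervalIntegral.integral_of_le (by linarith : (k:ℝ) * T ≤ (k:ℝ) * T + T),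
            intervalIntegral.integral_comp_sub_right φ ((k:ℝ) * T), sub_self, add_sub_cancel_left,
            intervalIntegral.integral_of_le hT.le, integral_Ioc_eq_integral_Ioo,
            ← integral_Ico_eq_integral_Ioo]
        rw [htrans]
      have hc : 0 < ∫ x in Ico (0:ℝ) T, φ x := by
        have hpos : 0 < ∫ y in (0:ℝ)..ε, φ y := by
          apply intervalIntegral.intervalIntegral_pos_of_pos_on
            (hφc.intervalIntegrable _ _) _ hε0
          intro y hy
          exact lt_of_lt_of_le (lt_min (by linarith [hy.1]) (by linarith [hy.2])) (le_max_right _ _)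
        have hmono : (∫ y in (0:ℝ)..ε, φ y) ≤ ∫ y in (0:ℝ)..T, φ y :=
          intervalIntegral.integral_mono_interval (le_refl 0) hε0.le hεT
            (ae_of_all _ fun y => hφnn y) (hφc.intervalIntegrable _ _)
        have heq : (∫ x in Ico (0:ℝ) T, φ x) = ∫ y in (0:ℝ)..T, φ y := by
          rw [intervalIntegral.integral_of_le hT.le, integral_Ioc_eq_integral_Ioo,
            ← integral_Ico_eq_integral_Ioo]
        rw [heq]; linarith
      have hcell0 := cellbound 0 δ (by
        intro y hy
        simp only [Int.cast_zero, zero_mul, sub_zero] at hy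
        exact (hb₀ y (by rw [sub_zero]; exact lt_of_le_of_lt hy hεr₀)).le)
      have hcell1 := cellbound 1 δ (by
        intro y hy
        simp only [Int.cast_one, one_mul] at hy
        exact (hb₁ y (lt_of_le_of_lt hy hεr₁)).le)
      have hcelln := cellbound n (F ((n:ℝ) * T) + δ) (by
        intro y hy
        exact (hb₂ y (lt_of_le_of_lt hy hεr₂)).le)
      simp only [Int.cast_zero, zero_mul, Int.cast_one, one_mul, zero_add] at hcell0 hcell1
      have hAle : (∫ x in A, AddCircle.liftIco T 0 φ (x : AddCircle T) * F x)
          ≤ (F ((n:ℝ) * T) + 3 * δ) * ∫ x in Ico (0:ℝ) T, φ x := by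
        rw [hAsum]
        nlinarith [hcell0, hcell1, hcelln]
      nlinarith [hsplit, hint0, hcompl, hAle, hc]
    rw [hδ] at hclaim
    linarith
  have hFx₁ : F ((n:ℝ) * T) = 0 := le_antisymm hFx₁le hFx₁ge
  -- ### Stage 3 : local maximum, hence derivative zero
  have hmax : IsLocalMax F ((n:ℝ) * T) := by
    filter_upwards [Ioo_mem_nhds (show (n:ℝ) * T - T < (n:ℝ) * T by linarith)
      (show (n:ℝ) * T < (n:ℝ) * T + T by linarith)] with y hy
    rw [hFx₁]
    apply hFout
    rcases hncase with h | h
    · left; nlinarith [hy.2]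
    · right; nlinarith [hy.1]
  exact hmax.deriv_eq_zero
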